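/- arXiv:2004.02480 — 2 statements merged into one kernel-verified Lean document; each statement's English description precedes it below -/
import Mathlib

section
/- Let A ∈ ℝ^{m×n}, b ∈ ℝ^m with Ax⋆ = b for x⋆ in the row space of A, and let S ∈ ℝ^{d×m} be such that all rows of SA are nonzero. Define the iteration: given x_k, choose i_k = argmax_{1≤i≤d} |(Sb)_i - (SA x_k)_i|/‖(SA)^{(i)}‖₂, and set x_{k+1} = x_k + (((Sb)_{i_k} - (SA)^{(i_k)} x_k)/‖(SA)^{(i_k)}‖₂²)·((SA)^{(i_k)})ᵀ. If x_k - x⋆ lies in the row space of A, then ‖x_{k+1} - x⋆‖₂² ≤ ‖x_k - x⋆‖₂² - ‖SA(x_k - x⋆)‖₂²/‖SA‖_F². -/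
open scoped BigOperators

/-- Squared Euclidean norm of a vector in `ℝ^n`. -/
noncomputable def sqNorm {n : ℕ} (x : Fin n → ℝ) : ℝ := ∑ i, x i ^ 2

/-- Squared Frobenius norm of a matrix. -/
noncomputable def frobSq {d n : ℕ} (M : Matrix (Fin d) (Fin n) ℝ) : ℝ :=
  ∑ i, ∑ j, (M i j) ^ 2

/-- The `k`-th largest singular value of a real matrix, via the Courant–Fischer
max-min characterization: the supremum of nonnegative `c` such that some
`k`-dimensional subspace `V` satisfies `‖Ay‖ ≥ c‖y‖` for all `y ∈ V`. -/
noncomputable def sv {m n : ℕ} (A : Matrix (Fin m) (Fin n) ℝ) (k : ℕ) : ℝ :=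
  sSup {c : ℝ | 0 ≤ c ∧ ∃ V : Submodule ℝ (Fin n → ℝ), Module.finrank ℝ V = k ∧
    ∀ y ∈ V, c ^ 2 * sqNorm y ≤ sqNorm (A.mulVec y)}

/-- one-step contraction bound for the count-sketch Kaczmarz
(maximal weighted residual) step: the squared error decreases by at least
`‖SA(x_k - x⋆)‖² / ‖SA‖_F²`. -/
theorem csk_one_step_bound {m n d : ℕ}
    (A : Matrix (Fin m) (Fin n) ℝ) (b : Fin m → ℝ) (xs : Fin n → ℝ)
    (hxs : A.mulVec xs = b) (hxs_row : ∃ z : Fin m → ℝ, A.transpose.mulVec z = xs)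
    (S : Matrix (Fin d) (Fin m) ℝ) (hrows : ∀ i : Fin d, (S * A) i ≠ 0)
    (xk : Fin n → ℝ) (hk : ∃ z : Fin m → ℝ, A.transpose.mulVec z = xk - xs)
    (ik : Fin d)
    (hik : ∀ i : Fin d,
      |S.mulVec b i - (S * A).mulVec xk i| / Real.sqrt (sqNorm ((S * A) i)) ≤
      |S.mulVec b ik - (S * A).mulVec xk ik| / Real.sqrt (sqNorm ((S * A) ik)))
    (xk1 : Fin n → ℝ)
    (hupd : xk1 = xk + ((S.mulVec b ik - ∑ j, (S * A) ik j * xk j) / sqNorm ((S * A) ik))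
        • (S * A) ik) :
    sqNorm (xk1 - xs) ≤ sqNorm (xk - xs)
      - sqNorm ((S * A).mulVec (xk - xs)) / frobSq (S * A) := by
  classical
  set M := S * A with hM
  set e := xk - xs with he
  set r := M.mulVec e with hr
  have hSb : S.mulVec b = M.mulVec xs := by
    rw [← hxs, hM, ← Matrix.mulVec_mulVec]
  have hrow_pos : ∀ i, 0 < sqNorm (M i) := by
    intro i
    obtain ⟨j, hj⟩ := Function.ne_iff.mp (hrows i)
    have h1 : (0:ℝ) < M i j ^ 2 := pow_two_pos_of_ne_zero hj
    exact lt_of_lt_of_le h1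
      (Finset.single_le_sum (fun k _ => sq_nonneg (M i k)) (Finset.mem_univ j))
  have hres : ∀ i, S.mulVec b i - M.mulVec xk i = - r i := by
    intro i
    have : M.mulVec e = M.mulVec xk - M.mulVec xs := by
      rw [he, Matrix.mulVec_sub]
    rw [hSb, hr, this]
    simp
  have hrik : ∑ j, M ik j * e j = r ik := by
    simp [hr, Matrix.mulVec, dotProduct]
  set c := (S.mulVec b ik - ∑ j, M ik j * xk j) / sqNorm (M ik) with hc
  have hcval : c = (- r ik) / sqNorm (M ik) := by
    rw [hc, ← hres ik]
    congr 1
  have hx1 : xk1 - xs = e + c • M ik := by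
    rw [hupd, he]
    exact add_sub_right_comm xk (c • M ik) xs
  have hexp : sqNorm (xk1 - xs) = sqNorm e + 2*c*(r ik) + c^2 * sqNorm (M ik) := by
    rw [hx1]
    have : ∀ j, (e j + c * M ik j)^2
        = e j ^ 2 + (2*c) * (M ik j * e j) + c^2 * (M ik j)^2 := fun j => by ring
    simp only [sqNorm, Pi.add_apply, Pi.smul_apply, smul_eq_mul, this,
      Finset.sum_add_distrib, ← Finset.mul_sum, hrik]
  have hsik := (hrow_pos ik).ne'
  have hval : sqNorm (xk1 - xs) = sqNorm e - r ik ^ 2 / sqNorm (M ik) := by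
    rw [hexp, hcval]
    field_simp
    ring
  have hcomp : ∀ i, r i ^ 2 ≤ (r ik ^ 2 / sqNorm (M ik)) * sqNorm (M i) := by
    intro i
    have h' : |r i| / Real.sqrt (sqNorm (M i)) ≤ |r ik| / Real.sqrt (sqNorm (M ik)) := by
      simpa [hres, abs_neg] using hik i
    have hsi := (hrow_pos i).ne'
    have h2 : (|r i| / Real.sqrt (sqNorm (M i)))^2
        ≤ (|r ik| / Real.sqrt (sqNorm (M ik)))^2 := by
      apply pow_le_pow_left₀ (by positivity) h' 2
    rw [div_pow, div_pow, sq_abs, sq_abs,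
      Real.sq_sqrt (hrow_pos i).le, Real.sq_sqrt (hrow_pos ik).le] at h2
    calc r i ^ 2 = (r i ^ 2 / sqNorm (M i)) * sqNorm (M i) := by
          field_simp
      _ ≤ (r ik ^ 2 / sqNorm (M ik)) * sqNorm (M i) :=
          mul_le_mul_of_nonneg_right h2 (hrow_pos i).le
  have hfrob : frobSq M = ∑ i, sqNorm (M i) := rfl
  have hF : 0 < frobSq M := by
    rw [hfrob]
    exact Finset.sum_pos (fun i _ => hrow_pos i) ⟨ik, Finset.mem_univ ik⟩
  have hsum : sqNorm r ≤ (r ik ^ 2 / sqNorm (M ik)) * frobSq M := by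
    calc sqNorm r = ∑ i, r i ^ 2 := rfl
      _ ≤ ∑ i, (r ik ^ 2 / sqNorm (M ik)) * sqNorm (M i) :=
          Finset.sum_le_sum (fun i _ => hcomp i)
      _ = (r ik ^ 2 / sqNorm (M ik)) * frobSq M := by rw [hfrob, Finset.mul_sum]
  have hdiv : sqNorm r / frobSq M ≤ r ik ^ 2 / sqNorm (M ik) :=
    (div_le_iff₀ hF).mpr hsum
  rw [hval]
  exact sub_le_sub_left hdiv _
end

section
/- Let A ∈ ℝ^{m×n} be nonzero, x⋆ with Ax⋆ = b, and S ∈ ℝ^{d×m} satisfying (1-ε)‖Ax‖₂² ≤ ‖SAx‖₂² ≤ (1+ε)‖Ax‖₂² for all x ∈ ℝ^n, with 0 < ε < 1, and such that all rows of SA are nonzero. Starting from x₀ in the row space of A, the CSK iterates x_{k+1} = x_k + (((Sb)_{i_k} - (SA)^{(i_k)} x_k)/‖(SA)^{(i_k)}‖₂²)·((SA)^{(i_k)})ᵀ with i_k maximizing |(Sb)_i - (SA x_k)_i|/‖(SA)^{(i)}‖₂ satisfy ‖x_{k+1} - x⋆‖₂² ≤ (1 - (1-ε)³ σ_r(A)²/(n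 ‖A‖₂²)) ‖x_k - x⋆‖₂². -/
open scoped BigOperators

lemma sqNorm_nonneg {n : ℕ} (x : Fin n → ℝ) : 0 ≤ sqNorm x :=
  Finset.sum_nonneg fun _ _ => sq_nonneg _

lemma sqNorm_zero {n : ℕ} : sqNorm (0 : Fin n → ℝ) = 0 := by simp [sqNorm]

lemma sqNorm_eq_zero_iff {n : ℕ} {x : Fin n → ℝ} : sqNorm x = 0 ↔ x = 0 := by
  constructor
  · intro h
    funext i
    have := (Finset.sum_eq_zero_iff_of_nonneg (fun i _ => sq_nonneg (x i))).1 h i (Finset.mem_univ i)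
    exact pow_eq_zero_iff (by norm_num) |>.1 this
  · rintro rfl; exact sqNorm_zero

lemma sqNorm_pos {n : ℕ} {x : Fin n → ℝ} (h : x ≠ 0) : 0 < sqNorm x :=
  lt_of_le_of_ne (sqNorm_nonneg x) (fun h' => h (sqNorm_eq_zero_iff.1 h'.symm))

lemma sqNorm_add {n : ℕ} (u v : Fin n → ℝ) :
    sqNorm (u + v) = sqNorm u + 2 * (∑ i, u i * v i) + sqNorm v := by
  have h : ∀ i : Fin n, (u i + v i) ^ 2 = u i ^ 2 + 2 * (u i * v i) + v i ^ 2 := by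
    intro i; ring
  simp only [sqNorm, Pi.add_apply, h, Finset.sum_add_distrib, Finset.mul_sum]

lemma sqNorm_smul {n : ℕ} (t : ℝ) (v : Fin n → ℝ) : sqNorm (t • v) = t ^ 2 * sqNorm v := by
  simp only [sqNorm, Pi.smul_apply, smul_eq_mul, mul_pow, ← Finset.mul_sum]

lemma sqNorm_mulVec_le {m n : ℕ} (M : Matrix (Fin m) (Fin n) ℝ) (y : Fin n → ℝ) :
    sqNorm (M.mulVec y) ≤ frobSq M * sqNorm y := by
  calc sqNorm (M.mulVec y) = ∑ i, (∑ j, M i j * y j) ^ 2 := rfl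
    _ ≤ ∑ i, (∑ j, M i j ^ 2) * sqNorm y :=
        Finset.sum_le_sum fun i _ => Finset.sum_mul_sq_le_sq_mul_sq _ _ _
    _ = frobSq M * sqNorm y := (Finset.sum_mul _ _ _).symm

lemma dot_row_ker {m n : ℕ} (A : Matrix (Fin m) (Fin n) ℝ) {u w : Fin n → ℝ}
    (hu : ∃ z, A.transpose.mulVec z = u) (hw : A.mulVec w = 0) :
    ∑ j, u j * w j = 0 := by
  obtain ⟨z, rfl⟩ := hu
  simp only [Matrix.mulVec, dotProduct, Matrix.transpose_apply]
  calc (∑ j, (∑ l, A l j * z l) * w j)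
      = ∑ j, ∑ l, A l j * z l * w j := by
        refine Finset.sum_congr rfl fun j _ => Finset.sum_mul _ _ _
    _ = ∑ l, ∑ j, A l j * z l * w j := Finset.sum_comm
    _ = ∑ l, z l * (∑ j, A l j * w j) := by
        refine Finset.sum_congr rfl fun l _ => ?_
        rw [Finset.mul_sum]
        exact Finset.sum_congr rfl fun j _ => by ring
    _ = 0 := by
        refine Finset.sum_eq_zero fun l _ => ?_
        have : (A.mulVec w) l = 0 := by rw [hw]; rfl
        simp only [Matrix.mulVec, dotProduct] at this
        rw [this, mul_zero]

lemma sv_bddAbove {m n : ℕ} (A : Matrix (Fin m) (Fin n) ℝ) {k : ℕ} (hk : 0 < k) :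
    BddAbove {c : ℝ | 0 ≤ c ∧ ∃ V : Submodule ℝ (Fin n → ℝ), Module.finrank ℝ V = k ∧
      ∀ y ∈ V, c ^ 2 * sqNorm y ≤ sqNorm (A.mulVec y)} := by
  refine ⟨Real.sqrt (frobSq A), ?_⟩
  rintro c ⟨hc0, V, hVr, hV⟩
  have hVne : V ≠ ⊥ := by
    intro h
    rw [h, finrank_bot] at hVr
    omega
  obtain ⟨y, hyV, hy0⟩ := Submodule.ne_bot_iff V |>.1 hVne
  have hy : 0 < sqNorm y := sqNorm_pos hy0
  have h1 : c ^ 2 * sqNorm y ≤ frobSq A * sqNorm y :=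
    (hV y hyV).trans (sqNorm_mulVec_le A y)
  have h2 : c ^ 2 ≤ frobSq A := le_of_mul_le_mul_right h1 hy
  exact (Real.le_sqrt hc0 (le_trans (sq_nonneg c) h2)).2 h2

lemma sq_mulVec_le_sv_one {m n : ℕ} (A : Matrix (Fin m) (Fin n) ℝ) {y : Fin n → ℝ}
    (hy : sqNorm y = 1) : sqNorm (A.mulVec y) ≤ (sv A 1) ^ 2 ∧ 0 ≤ sv A 1 := by
  have hy0 : y ≠ 0 := by
    intro h; rw [h, sqNorm_zero] at hy; norm_num at hy
  set c := Real.sqrt (sqNorm (A.mulVec y)) with hc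
  have hc0 : 0 ≤ c := Real.sqrt_nonneg _
  have hc2 : c ^ 2 = sqNorm (A.mulVec y) := Real.sq_sqrt (sqNorm_nonneg _)
  have hmem : c ∈ {c : ℝ | 0 ≤ c ∧ ∃ V : Submodule ℝ (Fin n → ℝ), Module.finrank ℝ V = 1 ∧
      ∀ z ∈ V, c ^ 2 * sqNorm z ≤ sqNorm (A.mulVec z)} := by
    refine ⟨hc0, Submodule.span ℝ {y}, finrank_span_singleton hy0, ?_⟩
    intro z hz
    obtain ⟨t, rfl⟩ := Submodule.mem_span_singleton.1 hz
    rw [Matrix.mulVec_smul, sqNorm_smul, sqNorm_smul, hy, hc2]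
    ring_nf
    exact le_refl _
  have hle : c ≤ sv A 1 := le_csSup (sv_bddAbove A one_pos) hmem
  have hsv0 : 0 ≤ sv A 1 := hc0.trans hle
  exact ⟨hc2 ▸ pow_le_pow_left₀ hc0 hle 2, hsv0⟩

lemma rowspace_bound {m n : ℕ} (A : Matrix (Fin m) (Fin n) ℝ) (e : Fin n → ℝ)
    (he : ∃ z, A.transpose.mulVec z = e) :
    (sv A A.rank) ^ 2 * sqNorm e ≤ sqNorm (A.mulVec e) := by
  rcases eq_or_ne e 0 with rfl | he0
  · simp [sqNorm_zero, Matrix.mulVec_zero, sqNorm_nonneg]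
  have hE : 0 < sqNorm e := sqNorm_pos he0
  set Q := sqNorm (A.mulVec e) with hQ
  have hQ0 : 0 ≤ Q := sqNorm_nonneg _
  set R := LinearMap.range (Matrix.mulVecLin A.transpose) with hR
  set K := LinearMap.ker (Matrix.mulVecLin A) with hK
  have hmemR : ∀ u : Fin n → ℝ, u ∈ R ↔ ∃ z, A.transpose.mulVec z = u := by
    intro u
    constructor
    · rintro ⟨z, rfl⟩; exact ⟨z, rfl⟩
    · rintro ⟨z, rfl⟩; exact ⟨z, rfl⟩
  have heR : e ∈ R := (hmemR e).2 he
  have hdisj : Disjoint K R := by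
    rw [Submodule.disjoint_def]
    intro u huK huR
    have hAu : A.mulVec u = 0 := huK
    have h0 : ∑ j, u j * u j = 0 := dot_row_ker A ((hmemR u).1 huR) hAu
    have h1 : sqNorm u = 0 := by
      rw [sqNorm, ← h0]
      exact Finset.sum_congr rfl fun j _ => sq (u j)
    exact sqNorm_eq_zero_iff.1 h1
  have hrankR : Module.finrank ℝ R = A.rank := A.rank_transpose
  have hrankK : Module.finrank ℝ K + A.rank = n := by
    have h := LinearMap.finrank_range_add_finrank_ker (Matrix.mulVecLin A)
    rw [Module.finrank_fin_fun] at h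
    have h2 : A.rank = Module.finrank ℝ (LinearMap.range (Matrix.mulVecLin A)) := rfl
    rw [hK]
    omega
  have hinf : R ⊓ K = ⊥ := disjoint_iff.mp hdisj.symm
  have hsup : R ⊔ K = ⊤ := by
    apply Submodule.eq_top_of_finrank_eq
    have h1 := Submodule.finrank_sup_add_finrank_inf_eq R K
    rw [hinf, finrank_bot, add_zero] at h1
    rw [h1, hrankR, Module.finrank_fin_fun]
    omega
  have hcompl : IsCompl R K := ⟨disjoint_iff.mpr hinf, codisjoint_iff.mpr hsup⟩
  set π := Submodule.linearProjOfIsCompl R K hcompl with hπ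
  -- It suffices to bound every element of the sv set.
  have key : ∀ c ∈ {c : ℝ | 0 ≤ c ∧ ∃ V : Submodule ℝ (Fin n → ℝ),
      Module.finrank ℝ V = A.rank ∧ ∀ y ∈ V, c ^ 2 * sqNorm y ≤ sqNorm (A.mulVec y)},
      c ≤ Real.sqrt (Q / sqNorm e) := by
    rintro c ⟨hc0, V, hVr, hV⟩
    rw [Real.le_sqrt hc0 (div_nonneg hQ0 hE.le), le_div_iff₀ hE]
    rcases hc0.eq_or_lt with hceq | hcpos
    · rw [← hceq]; simpa using hQ0
    -- f : V → R is the restriction of the projection; it is injective hence surjective.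
    set f : V →ₗ[ℝ] R := π.comp V.subtype with hf
    have hfinj : Function.Injective f := by
      rw [← LinearMap.ker_eq_bot]
      rw [Submodule.eq_bot_iff]
      rintro ⟨y, hyV⟩ hy
      have hyK : y ∈ K := by
        have : π y = 0 := hy
        exact (Submodule.linearProjOfIsCompl_apply_eq_zero_iff hcompl).1 this
      have hAy : A.mulVec y = 0 := hyK
      have h2 : c ^ 2 * sqNorm y ≤ 0 := by
        have := hV y hyV
        rwa [hAy, sqNorm_zero] at this
      have h3 : sqNorm y ≤ 0 := by
        have h2' := h2.trans_eq (mul_zero (c ^ 2)).symm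
        exact le_of_mul_le_mul_left h2' (pow_pos hcpos 2)
      have : y = 0 := sqNorm_eq_zero_iff.1 (le_antisymm h3 (sqNorm_nonneg y))
      exact Subtype.ext this
    have hfsurj : Function.Surjective f := by
      have heq : Module.finrank ℝ V = Module.finrank ℝ R := by rw [hVr, hrankR]
      exact (LinearMap.injective_iff_surjective_of_finrank_eq_finrank heq).1 hfinj
    obtain ⟨⟨y, hyV⟩, hyproj⟩ := hfsurj ⟨e, heR⟩
    have hπy : π y = ⟨e, heR⟩ := hyproj
    set w := y - e with hw
    have hwK : w ∈ K := by
      have hπe : π e = ⟨e, heR⟩ := Submodule.linearProjOfIsCompl_apply_left hcompl ⟨e, heR⟩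
      have : π w = 0 := by
        rw [hw, map_sub, hπy, hπe, sub_self]
      exact (Submodule.linearProjOfIsCompl_apply_eq_zero_iff hcompl).1 this
    have hAw : A.mulVec w = 0 := hwK
    have hdot : ∑ j, e j * w j = 0 := dot_row_ker A he hAw
    have hy_decomp : y = e + w := by rw [hw]; abel
    have hsq : sqNorm y = sqNorm e + sqNorm w := by
      rw [hy_decomp, sqNorm_add, hdot]; ring
    have hAy : A.mulVec y = A.mulVec e := by
      rw [hy_decomp, Matrix.mulVec_add, hAw, add_zero]
    have hchain : c ^ 2 * sqNorm y ≤ Q := by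
      have := hV y hyV
      rwa [hAy, ← hQ] at this
    have : c ^ 2 * sqNorm e ≤ c ^ 2 * sqNorm y := by
      apply mul_le_mul_of_nonneg_left _ (sq_nonneg c)
      rw [hsq]
      linarith [sqNorm_nonneg w]
    linarith
  have hsv_le : sv A A.rank ≤ Real.sqrt (Q / sqNorm e) :=
    Real.sSup_le key (Real.sqrt_nonneg _)
  have hsv0 : 0 ≤ sv A A.rank := Real.sSup_nonneg (fun c hc => hc.1)
  have h4 : (sv A A.rank) ^ 2 ≤ Q / sqNorm e := by
    have := pow_le_pow_left₀ hsv0 hsv_le 2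
    rwa [Real.sq_sqrt (div_nonneg hQ0 hE.le)] at this
  calc (sv A A.rank) ^ 2 * sqNorm e ≤ (Q / sqNorm e) * sqNorm e :=
        mul_le_mul_of_nonneg_right h4 hE.le
    _ = Q := by field_simp

lemma sqNorm_single {n : ℕ} (j : Fin n) : sqNorm (Pi.single j (1 : ℝ)) = 1 := by
  classical
  rw [sqNorm, Finset.sum_eq_single j]
  · simp
  · intro i _ hij; simp [Pi.single_apply, hij]
  · simp

lemma frobSq_eq_cols {d n : ℕ} (M : Matrix (Fin d) (Fin n) ℝ) :
    frobSq M = ∑ j, sqNorm (M.mulVec (Pi.single j (1 : ℝ))) := by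
  rw [frobSq, Finset.sum_comm]
  refine Finset.sum_congr rfl fun j _ => ?_
  rw [sqNorm]
  refine Finset.sum_congr rfl fun i _ => ?_
  simp [Matrix.mulVec_single]

lemma sv_one_pos {m n : ℕ} {A : Matrix (Fin m) (Fin n) ℝ} (hA : A ≠ 0) : 0 < sv A 1 := by
  have : ∃ i j, A i j ≠ 0 := by
    by_contra h
    push_neg at h
    exact hA (by ext i j; exact h i j)
  obtain ⟨i, j, hij⟩ := this
  have h1 := sq_mulVec_le_sv_one A (sqNorm_single j)
  have h2 : (A i j) ^ 2 ≤ sqNorm (A.mulVec (Pi.single j 1)) := by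
    have hcol : (A.mulVec (Pi.single j 1)) i = A i j := by simp [Matrix.mulVec_single]
    rw [sqNorm, ← hcol]
    exact Finset.single_le_sum (f := fun k => (A.mulVec (Pi.single j (1 : ℝ))) k ^ 2)
      (fun k _ => sq_nonneg _) (Finset.mem_univ i)
  have h3 : 0 < (sv A 1) ^ 2 := lt_of_lt_of_le (by positivity) (h2.trans h1.1)
  rcases h1.2.eq_or_lt with h | h
  · rw [← h] at h3; simp at h3
  · exact h

/-- per-step convergence bound of the count-sketch Kaczmarz method:
`‖x_{k+1} - x⋆‖² ≤ (1 - (1-ε)³ σ_r(A)²/(n ‖A‖₂²)) ‖x_k - x⋆‖²`. -/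
theorem csk_convergence_step {m n d : ℕ}
    (A : Matrix (Fin m) (Fin n) ℝ) (hA : A ≠ 0) (b : Fin m → ℝ) (xs : Fin n → ℝ)
    (hxs : A.mulVec xs = b) (hxs_row : ∃ z : Fin m → ℝ, A.transpose.mulVec z = xs)
    (ε : ℝ) (hε0 : 0 < ε) (hε1 : ε < 1)
    (S : Matrix (Fin d) (Fin m) ℝ)
    (hemb : ∀ v : Fin n → ℝ,
      (1 - ε) * sqNorm (A.mulVec v) ≤ sqNorm ((S * A).mulVec v) ∧
      sqNorm ((S * A).mulVec v) ≤ (1 + ε) * sqNorm (A.mulVec v))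
    (hrows : ∀ i : Fin d, (S * A) i ≠ 0)
    (x : ℕ → Fin n → ℝ) (hx0 : ∃ z : Fin m → ℝ, A.transpose.mulVec z = x 0)
    (ik : ℕ → Fin d)
    (hik : ∀ (k : ℕ) (i : Fin d),
      |S.mulVec b i - (S * A).mulVec (x k) i| / Real.sqrt (sqNorm ((S * A) i)) ≤
      |S.mulVec b (ik k) - (S * A).mulVec (x k) (ik k)|
        / Real.sqrt (sqNorm ((S * A) (ik k))))
    (hupd : ∀ k : ℕ, x (k + 1) = x k +
      ((S.mulVec b (ik k) - ∑ j, (S * A) (ik k) j * x k j) / sqNorm ((S * A) (ik k)))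
        • (S * A) (ik k)) :
    ∀ k : ℕ, sqNorm (x (k + 1) - xs) ≤
      (1 - (1 - ε) ^ 3 * (sv A A.rank) ^ 2 / (n * (sv A 1) ^ 2))
        * sqNorm (x k - xs) := by
  -- iterates stay in the row space
  have hrowk : ∀ k : ℕ, ∃ z, A.transpose.mulVec z = x k := by
    intro k
    induction k with
    | zero => exact hx0
    | succ k ih =>
        obtain ⟨z, hz⟩ := ih
        refine ⟨z + ((S.mulVec b (ik k) - ∑ j, (S * A) (ik k) j * x k j)
          / sqNorm ((S * A) (ik k))) • (fun l => S (ik k) l), ?_⟩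
        rw [hupd k, Matrix.mulVec_add, hz, Matrix.mulVec_smul]
        congr 1
        congr 1
        funext j
        simp only [Matrix.mulVec, dotProduct, Matrix.transpose_apply, Matrix.mul_apply]
        exact Finset.sum_congr rfl fun l _ => mul_comm _ _
  have hn0 : n ≠ 0 := by
    rintro rfl
    exact hA (by ext i j; exact j.elim0)
  have hn : (0 : ℝ) < n := by
    exact_mod_cast Nat.pos_of_ne_zero hn0
  have hσ1 : 0 < sv A 1 := sv_one_pos hA
  have hden : (0 : ℝ) < n * (sv A 1) ^ 2 := by positivity
  intro k
  set e := x k - xs with he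
  set N := sqNorm ((S * A) (ik k)) with hNdef
  have hN : 0 < N := sqNorm_pos (hrows (ik k))
  set r := S.mulVec b (ik k) - (S * A).mulVec (x k) (ik k) with hr
  have hSb : S.mulVec b = (S * A).mulVec xs := by
    rw [← hxs, Matrix.mulVec_mulVec]
  -- residuals in terms of the error vector
  have hres : ∀ i, S.mulVec b i - (S * A).mulVec (x k) i = -((S * A).mulVec e i) := by
    intro i
    rw [hSb, he, Matrix.mulVec_sub]
    simp only [Pi.sub_apply]
    ring
  -- Step A : exact decrease identity
  have hupd' : x (k + 1) - xs = e + (r / N) • (S * A) (ik k) := by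
    have hsum : (∑ j, (S * A) (ik k) j * x k j) = (S * A).mulVec (x k) (ik k) := rfl
    rw [hupd k, hsum, he, hr, hNdef]
    abel
  have hdotae : (∑ i, (S * A) (ik k) i * e i) = -r := by
    have h1 : (∑ i, (S * A) (ik k) i * e i) = (S * A).mulVec e (ik k) := rfl
    have h2 := hres (ik k)
    rw [h1]
    rw [hr]
    linarith [h2]
  have hstepA : sqNorm (x (k + 1) - xs) = sqNorm e - r ^ 2 / N := by
    rw [hupd', sqNorm_add, sqNorm_smul, ← hNdef]
    have hdot : (∑ i, e i * ((r / N) • (S * A) (ik k)) i) = (r / N) * (-r) := by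
      simp only [Pi.smul_apply, smul_eq_mul]
      rw [← hdotae, Finset.mul_sum]
      exact Finset.sum_congr rfl fun i _ => by ring
    rw [hdot]
    field_simp
    ring
  -- Step B/C : greedy bound, summed
  set Q := sqNorm ((S * A).mulVec e) with hQdef
  set F := frobSq (S * A) with hFdef
  have hQF : Q ≤ r ^ 2 / N * F := by
    have hterm : ∀ i : Fin d,
        ((S * A).mulVec e i) ^ 2 ≤ r ^ 2 / N * sqNorm ((S * A) i) := by
      intro i
      have hNi : 0 < sqNorm ((S * A) i) := sqNorm_pos (hrows i)
      have h := hik k i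
      have hsq := pow_le_pow_left₀ (div_nonneg (abs_nonneg _) (Real.sqrt_nonneg _)) h 2
      rw [div_pow, div_pow, sq_abs, sq_abs, Real.sq_sqrt hNi.le, Real.sq_sqrt hN.le] at hsq
      have hri : (S.mulVec b i - (S * A).mulVec (x k) i) ^ 2 = ((S * A).mulVec e i) ^ 2 := by
        rw [hres i, neg_sq]
      rw [hri] at hsq
      calc ((S * A).mulVec e i) ^ 2
          = ((S * A).mulVec e i) ^ 2 / sqNorm ((S * A) i) * sqNorm ((S * A) i) := by
            field_simp
        _ ≤ r ^ 2 / N * sqNorm ((S * A) i) :=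
            mul_le_mul_of_nonneg_right hsq hNi.le
    have hsumQ : Q = ∑ i, ((S * A).mulVec e i) ^ 2 := rfl
    have hsumF : F = ∑ i, sqNorm ((S * A) i) := rfl
    rw [hsumQ, hsumF, Finset.mul_sum]
    exact Finset.sum_le_sum fun i _ => hterm i
  -- Step D : lower bound on Q
  have herow : ∃ z, A.transpose.mulVec z = e := by
    obtain ⟨z1, hz1⟩ := hrowk k
    obtain ⟨z2, hz2⟩ := hxs_row
    exact ⟨z1 - z2, by rw [Matrix.mulVec_sub, hz1, hz2, he]⟩
  have hlow : (1 - ε) * ((sv A A.rank) ^ 2 * sqNorm e) ≤ Q := by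
    calc (1 - ε) * ((sv A A.rank) ^ 2 * sqNorm e)
        ≤ (1 - ε) * sqNorm (A.mulVec e) :=
          mul_le_mul_of_nonneg_left (rowspace_bound A e herow) (by linarith)
      _ ≤ Q := (hemb e).1
  -- Step E : upper bound on F
  have hFE : F ≤ (1 + ε) * (n * (sv A 1) ^ 2) := by
    rw [hFdef, frobSq_eq_cols]
    calc (∑ j, sqNorm ((S * A).mulVec (Pi.single j (1 : ℝ))))
        ≤ ∑ j : Fin n, (1 + ε) * sqNorm (A.mulVec (Pi.single j (1 : ℝ))) :=
          Finset.sum_le_sum fun j _ => (hemb _).2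
      _ ≤ ∑ j : Fin n, (1 + ε) * (sv A 1) ^ 2 :=
          Finset.sum_le_sum fun j _ =>
            mul_le_mul_of_nonneg_left (sq_mulVec_le_sv_one A (sqNorm_single j)).1
              (by linarith)
      _ = (1 + ε) * (n * (sv A 1) ^ 2) := by
          rw [Finset.sum_const, Finset.card_univ, Fintype.card_fin, nsmul_eq_mul]
          ring
  -- combine
  have hD0 : 0 ≤ r ^ 2 / N := by positivity
  have hpos : (0 : ℝ) < 1 + ε - ε ^ 2 := by nlinarith
  have hcoef : (1 - ε) ^ 2 * (1 + ε) ≤ 1 := by nlinarith [mul_pos hε0 hpos]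
  have hF2 : (1 - ε) ^ 2 * F ≤ n * (sv A 1) ^ 2 := by
    have h1 : (1 - ε) ^ 2 * F ≤ (1 - ε) ^ 2 * ((1 + ε) * (n * (sv A 1) ^ 2)) :=
      mul_le_mul_of_nonneg_left hFE (sq_nonneg _)
    have h2 : (1 - ε) ^ 2 * ((1 + ε) * (n * (sv A 1) ^ 2)) ≤ 1 * (n * (sv A 1) ^ 2) := by
      have := mul_le_mul_of_nonneg_right hcoef hden.le
      linarith [this]
    linarith
  have key : (1 - ε) ^ 3 * (sv A A.rank) ^ 2 * sqNorm e ≤ r ^ 2 / N * (n * (sv A 1) ^ 2) := by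
    calc (1 - ε) ^ 3 * (sv A A.rank) ^ 2 * sqNorm e
        = (1 - ε) ^ 2 * ((1 - ε) * ((sv A A.rank) ^ 2 * sqNorm e)) := by ring
      _ ≤ (1 - ε) ^ 2 * Q := mul_le_mul_of_nonneg_left hlow (sq_nonneg _)
      _ ≤ (1 - ε) ^ 2 * (r ^ 2 / N * F) := mul_le_mul_of_nonneg_left hQF (sq_nonneg _)
      _ = r ^ 2 / N * ((1 - ε) ^ 2 * F) := by ring
      _ ≤ r ^ 2 / N * (n * (sv A 1) ^ 2) := mul_le_mul_of_nonneg_left hF2 hD0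
  have hβE : (1 - ε) ^ 3 * (sv A A.rank) ^ 2 / (n * (sv A 1) ^ 2) * sqNorm e ≤ r ^ 2 / N := by
    rw [div_mul_eq_mul_div, div_le_iff₀ hden]
    exact key
  rw [hstepA]
  have hfinal : (1 - (1 - ε) ^ 3 * (sv A A.rank) ^ 2 / (n * (sv A 1) ^ 2)) * sqNorm e
      = sqNorm e - (1 - ε) ^ 3 * (sv A A.rank) ^ 2 / (n * (sv A 1) ^ 2) * sqNorm e := by
    ring
  rw [hfinal]
  linarith
end
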